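/- Under the presentation hypotheses, if μ satisfies μ(i,j) = μ(i▷j, i) = μ(j, i▷j) for all i, j (condition eq:mij) and μ(i,j) + μ(k▷i, k▷j) = λ(k,i)(λ(k,i▷j) + λ(i,j)) + λ(k,j)(λ(k,i) + λ(j,i▷j)) + λ(k,i▷j)(λ(k,j) + λ(i▷j,i)) for all i, j, k (condition eq:rel), then the algebra A_{λμ} is nontrivial, i.e., 1 ≠ 0 in A_{λμ}. -/

import Mathlib

/-- The rack operation `i ▷ j = 2i − j` on `ZMod 3`. -/
def rackOp (i j : ZMod 3) : ZMod 3 := 2 * i - j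

/-- The defining relations of the algebra `A_{λμ}`: `X_g X_h = X_{gh}`, `X_1 = 1`,
`X_g y_i = (y_{ρ(g)(i)} + b(g,i)) X_g`, and the deformed quadratic relations
`y_i y_j + y_{i▷j} y_i + y_j y_{i▷j} + λ(i,j) y_i + λ(i▷j,i) y_{i▷j} + λ(j,i▷j) y_j + μ(i,j) = 0`. -/
def ARel (k : Type*) [Field k] {G : Type*} [Group G] (g : ZMod 3 → G)
    (ρ : G →* Equiv.Perm (ZMod 3)) (b : G → ZMod 3 → k) (μ : ZMod 3 → ZMod 3 → k)
    (u v : FreeAlgebra k (G ⊕ ZMod 3)) : Prop :=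
  (∃ a c : G, u = FreeAlgebra.ι k (Sum.inl a) * FreeAlgebra.ι k (Sum.inl c) ∧
      v = FreeAlgebra.ι k (Sum.inl (a * c))) ∨
  (u = FreeAlgebra.ι k (Sum.inl (1 : G)) ∧ v = 1) ∨
  (∃ (a : G) (i : ZMod 3),
      u = FreeAlgebra.ι k (Sum.inl a) * FreeAlgebra.ι k (Sum.inr i) ∧
      v = (FreeAlgebra.ι k (Sum.inr (ρ a i)) + algebraMap k _ (b a i)) *
            FreeAlgebra.ι k (Sum.inl a)) ∨
  (∃ i j : ZMod 3,
      u = FreeAlgebra.ι k (Sum.inr i) * FreeAlgebra.ι k (Sum.inr j) +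
            FreeAlgebra.ι k (Sum.inr (rackOp i j)) * FreeAlgebra.ι k (Sum.inr i) +
            FreeAlgebra.ι k (Sum.inr j) * FreeAlgebra.ι k (Sum.inr (rackOp i j)) +
            b (g i) j • FreeAlgebra.ι k (Sum.inr i) +
            b (g (rackOp i j)) i • FreeAlgebra.ι k (Sum.inr (rackOp i j)) +
            b (g j) (rackOp i j) • FreeAlgebra.ι k (Sum.inr j) +
            algebraMap k _ (μ i j) ∧
      v = 0)

/-! ### Auxiliary decidable facts about the rack on `ZMod 3` -/

lemma zmod3_cases : ∀ z : ZMod 3, z = 0 ∨ z = 1 ∨ z = 2 := by decide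

lemma rackOp_self : ∀ i : ZMod 3, rackOp i i = i := by decide

lemma rackOp_ne : ∀ i j : ZMod 3, i ≠ j → rackOp i j ≠ i ∧ rackOp i j ≠ j := by decide

lemma rackOp_pair : ∀ i j : ZMod 3, i ≠ j →
    (j = i + 1 ∧ rackOp i j = i + 2) ∨ (j = i + 2 ∧ rackOp i j = i + 1) := by decide

lemma perm_rack : ∀ (σ : Equiv.Perm (ZMod 3)) (i j : ZMod 3),
    σ (rackOp i j) = rackOp (σ i) (σ j) := by decide

/-! ### The quadratic extension `R0` and the matrices realizing the deformed relations -/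

open Polynomial in
noncomputable def R0 (k : Type*) [Field k] (gam em0 : k) : Type _ :=
  AdjoinRoot (X ^ 2 + C gam * X + C em0 : k[X])

noncomputable instance R0.commRing (k : Type*) [Field k] (gam em0 : k) :
    CommRing (R0 k gam em0) := inferInstanceAs (CommRing (AdjoinRoot _))

noncomputable instance R0.algebra (k : Type*) [Field k] (gam em0 : k) :
    Algebra k (R0 k gam em0) := inferInstanceAs (Algebra k (AdjoinRoot _))

noncomputable def r0t (k : Type*) [Field k] (gam em0 : k) : R0 k gam em0 :=
  AdjoinRoot.root _

open Polynomial in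
lemma R0.nontrivial (k : Type*) [Field k] (gam em0 : k) : Nontrivial (R0 k gam em0) := by
  apply AdjoinRoot.nontrivial
  have h1 : degree (C gam * X + C em0 : k[X]) < 2 := by
    apply lt_of_le_of_lt (degree_add_le _ _)
    apply max_lt
    · exact lt_of_le_of_lt (Polynomial.degree_C_mul_X_le _) (by decide)
    · exact lt_of_le_of_lt degree_C_le (by decide)
  have h2 : degree (X ^ 2 + C gam * X + C em0 : k[X]) = 2 := by
    rw [add_assoc, degree_add_eq_left_of_degree_lt (by simpa using h1)]
    simp
  rw [h2]; decide

lemma r0_two (k : Type*) [Field k] (gam em0 : k) (h2 : (2 : k) = 0) :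
    (2 : R0 k gam em0) = 0 := by
  have : ((2 : k) • (1 : R0 k gam em0)) = 2 := by rw [Algebra.smul_def, mul_one, map_ofNat]
  rw [← this, h2, zero_smul]

open Polynomial in
lemma r0t_rel (k : Type*) [Field k] (gam em0 : k) :
    r0t k gam em0 * r0t k gam em0
      + algebraMap k (R0 k gam em0) gam * r0t k gam em0 + algebraMap k (R0 k gam em0) em0
      = 0 := by
  have h := AdjoinRoot.eval₂_root (X ^ 2 + C gam * X + C em0 : k[X])
  simp only [eval₂_add, eval₂_mul, eval₂_pow, eval₂_X, eval₂_C, ← AdjoinRoot.algebraMap_eq,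
    pow_two] at h
  exact h

noncomputable def PMdef (k : Type*) [Field k] (gam b1 b2 em0 emo : k) :
    ZMod 3 → Matrix (Fin 2) (Fin 2) (R0 k gam em0) := fun i =>
  if i = 0 then !![0, algebraMap k _ em0; 1, algebraMap k _ gam]
  else if i = 1 then
    !![algebraMap k _ b2 + r0t k gam em0,
       algebraMap k _ em0 + algebraMap k _ emo + algebraMap k _ b1 * algebraMap k _ b2
         + algebraMap k _ gam * r0t k gam em0;
       0, algebraMap k _ gam + algebraMap k _ b2 + r0t k gam em0]
  else
    !![algebraMap k _ b1 + r0t k gam em0,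
       algebraMap k _ em0 + algebraMap k _ emo + algebraMap k _ b1 * algebraMap k _ b2
         + algebraMap k _ gam * r0t k gam em0;
       0, algebraMap k _ gam + algebraMap k _ b1 + r0t k gam em0]

set_option maxHeartbeats 1000000 in
lemma PM_base {k : Type*} [Field k] (gam em0 emo : k) (bet : ZMod 3 → k)
    (LL MM : ZMod 3 → ZMod 3 → k)
    (h2 : (2 : k) = 0) (hs : bet 0 + bet 1 + bet 2 = gam)
    (hLd : ∀ i, LL i i = gam) (hLo : ∀ i j, j ≠ i → LL i j = bet i)
    (hM0 : MM 0 0 = em0)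
    (hM1 : MM 1 1 = em0 + (bet 2 * bet 2 + gam * bet 2))
    (hM2 : MM 2 2 = em0 + (bet 1 * bet 1 + gam * bet 1))
    (hMo : ∀ i j, i ≠ j → MM i j = emo) :
    ∀ i j, PMdef k gam (bet 1) (bet 2) em0 emo i * PMdef k gam (bet 1) (bet 2) em0 emo j
      + PMdef k gam (bet 1) (bet 2) em0 emo (rackOp i j) * PMdef k gam (bet 1) (bet 2) em0 emo i
      + PMdef k gam (bet 1) (bet 2) em0 emo j * PMdef k gam (bet 1) (bet 2) em0 emo (rackOp i j)
      + LL i j • PMdef k gam (bet 1) (bet 2) em0 emo i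
      + LL (rackOp i j) i • PMdef k gam (bet 1) (bet 2) em0 emo (rackOp i j)
      + LL j (rackOp i j) • PMdef k gam (bet 1) (bet 2) em0 emo j
      + MM i j • (1 : Matrix (Fin 2) (Fin 2) (R0 k gam em0)) = 0 := by
  have h2R := r0_two k gam em0 h2
  have htR := r0t_rel k gam em0
  set f := algebraMap k (R0 k gam em0) with hf
  set tt := r0t k gam em0 with htt
  have hsR : f (bet 0) + f (bet 1) + f (bet 2) = f gam := by rw [← map_add, ← map_add, hs]
  intro i j
  rcases zmod3_cases i with rfl | rfl | rfl <;> rcases zmod3_cases j with rfl | rfl | rfl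
  -- case (0,0)
  · rw [show rackOp 0 0 = 0 from by decide]
    rw [hLd 0]
    rw [hM0]
    rw [show PMdef k gam (bet 1) (bet 2) em0 emo 0 = !![0, f em0; 1, f gam] from by rw [PMdef, if_pos rfl]]
    ext r s
    fin_cases r <;> fin_cases s <;>
      simp only [Matrix.add_apply, Matrix.mul_apply, Fin.sum_univ_two, Matrix.smul_apply,
        Matrix.of_apply, Fin.zero_eta, Fin.mk_one, Fin.isValue, Matrix.cons_val',
        Matrix.cons_val_zero, Matrix.cons_val_one, Matrix.head_cons, Matrix.head_fin_const,
        Matrix.empty_val', Matrix.cons_val_fin_one, Matrix.one_apply_eq, Matrix.one_apply_ne,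
        Matrix.zero_apply, ne_eq, zero_ne_one, not_false_eq_true, one_ne_zero, Matrix.one_apply] <;>
      simp only [Algebra.smul_def, map_add, map_mul, ← hf, ← htt, if_true, if_false, reduceIte,
        mul_one, mul_zero, zero_mul, one_mul, add_zero, zero_add]
    · linear_combination ((2)*f em0) * h2R
    · linear_combination -((6)*f em0) * hsR + ((3)*f (bet 2)*f em0 + (3)*f (bet 1)*f em0 + (3)*f (bet 0)*f em0) * h2R
    · linear_combination -((6:R0 k gam em0)) * hsR + ((3)*f (bet 2) + (3)*f (bet 1) + (3)*f (bet 0)) * h2R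
    · linear_combination -((6)*f gam + (6)*f (bet 2) + (6)*f (bet 1) + (6)*f (bet 0)) * hsR + ((2)*f em0 + (3)*f (bet 2)*f (bet 2) + (6)*f (bet 1)*f (bet 2) + (3)*f (bet 1)*f (bet 1) + (6)*f (bet 0)*f (bet 2) + (6)*f (bet 0)*f (bet 1) + (3)*f (bet 0)*f (bet 0)) * h2R
  -- case (0,1)
  · rw [show rackOp 0 1 = 2 from by decide]
    rw [hLo 0 1 (by decide), hLo 2 0 (by decide), hLo 1 2 (by decide)]
    rw [hMo 0 1 (by decide)]
    rw [show PMdef k gam (bet 1) (bet 2) em0 emo 0 = !![0, f em0; 1, f gam] from by rw [PMdef, if_pos rfl],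
      show PMdef k gam (bet 1) (bet 2) em0 emo 1 = !![f (bet 2) + tt, f em0 + f emo + f (bet 1) * f (bet 2) + f gam * tt; 0, f gam + f (bet 2) + tt] from by rw [PMdef, if_neg (by decide), if_pos rfl],
      show PMdef k gam (bet 1) (bet 2) em0 emo 2 = !![f (bet 1) + tt, f em0 + f emo + f (bet 1) * f (bet 2) + f gam * tt; 0, f gam + f (bet 1) + tt] from by rw [PMdef, if_neg (by decide), if_neg (by decide)]]
    ext r s
    fin_cases r <;> fin_cases s <;>
      simp only [Matrix.add_apply, Matrix.mul_apply, Fin.sum_univ_two, Matrix.smul_apply,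
        Matrix.of_apply, Fin.zero_eta, Fin.mk_one, Fin.isValue, Matrix.cons_val',
        Matrix.cons_val_zero, Matrix.cons_val_one, Matrix.head_cons, Matrix.head_fin_const,
        Matrix.empty_val', Matrix.cons_val_fin_one, Matrix.one_apply_eq, Matrix.one_apply_ne,
        Matrix.zero_apply, ne_eq, zero_ne_one, not_false_eq_true, one_ne_zero, Matrix.one_apply] <;>
      simp only [Algebra.smul_def, map_add, map_mul, ← hf, ← htt, if_true, if_false, reduceIte,
        mul_one, mul_zero, zero_mul, one_mul, add_zero, zero_add]
    · linear_combination (1) * htR + (f emo + f (bet 2)*tt + f (bet 1)*tt + (2)*f (bet 1)*f (bet 2)) * h2R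
    · linear_combination ((2)*f gam) * htR - ((2)*f emo + f em0 + (2)*f (bet 2)*tt + (2)*f (bet 1)*tt + (2)*f (bet 1)*f (bet 2)) * hsR + (f emo*tt + (2)*f em0*tt + (2)*f (bet 2)*f emo + (2)*f (bet 2)*f em0 + f (bet 2)*f (bet 2)*tt + (2)*f (bet 1)*f emo + (2)*f (bet 1)*f em0 + (3)*f (bet 1)*f (bet 2)*tt + (2)*f (bet 1)*f (bet 2)*f (bet 2) + f (bet 1)*f (bet 1)*tt + (2)*f (bet 1)*f (bet 1)*f (bet 2) + f (bet 0)*f emo + f (bet 0)*f em0 + f (bet 0)*f (bet 2)*tt + f (bet 0)*f (bet 1)*tt + f (bet 0)*f (bet 1)*f (bet 2)) * h2R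
    · linear_combination -(1) * hsR + (tt + f (bet 2) + f (bet 1) + f (bet 0)) * h2R
    · linear_combination (1) * htR - ((4)*tt + (3)*f gam + (6)*f (bet 2) + (6)*f (bet 1) + (4)*f (bet 0)) * hsR + (f emo + (3)*f (bet 2)*tt + (3)*f (bet 2)*f (bet 2) + (3)*f (bet 1)*tt + (8)*f (bet 1)*f (bet 2) + (3)*f (bet 1)*f (bet 1) + (2)*f (bet 0)*tt + (5)*f (bet 0)*f (bet 2) + (5)*f (bet 0)*f (bet 1) + (2)*f (bet 0)*f (bet 0)) * h2R
  -- case (0,2)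
  · rw [show rackOp 0 2 = 1 from by decide]
    rw [hLo 0 2 (by decide), hLo 1 0 (by decide), hLo 2 1 (by decide)]
    rw [hMo 0 2 (by decide)]
    rw [show PMdef k gam (bet 1) (bet 2) em0 emo 0 = !![0, f em0; 1, f gam] from by rw [PMdef, if_pos rfl],
      show PMdef k gam (bet 1) (bet 2) em0 emo 1 = !![f (bet 2) + tt, f em0 + f emo + f (bet 1) * f (bet 2) + f gam * tt; 0, f gam + f (bet 2) + tt] from by rw [PMdef, if_neg (by decide), if_pos rfl],
      show PMdef k gam (bet 1) (bet 2) em0 emo 2 = !![f (bet 1) + tt, f em0 + f emo + f (bet 1) * f (bet 2) + f gam * tt; 0, f gam + f (bet 1) + tt] from by rw [PMdef, if_neg (by decide), if_neg (by decide)]]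
    ext r s
    fin_cases r <;> fin_cases s <;>
      simp only [Matrix.add_apply, Matrix.mul_apply, Fin.sum_univ_two, Matrix.smul_apply,
        Matrix.of_apply, Fin.zero_eta, Fin.mk_one, Fin.isValue, Matrix.cons_val',
        Matrix.cons_val_zero, Matrix.cons_val_one, Matrix.head_cons, Matrix.head_fin_const,
        Matrix.empty_val', Matrix.cons_val_fin_one, Matrix.one_apply_eq, Matrix.one_apply_ne,
        Matrix.zero_apply, ne_eq, zero_ne_one, not_false_eq_true, one_ne_zero, Matrix.one_apply] <;>
      simp only [Algebra.smul_def, map_add, map_mul, ← hf, ← htt, if_true, if_false, reduceIte,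
        mul_one, mul_zero, zero_mul, one_mul, add_zero, zero_add]
    · linear_combination (1) * htR + (f emo + f (bet 2)*tt + f (bet 1)*tt + (2)*f (bet 1)*f (bet 2)) * h2R
    · linear_combination ((2)*f gam) * htR - ((2)*f emo + f em0 + (2)*f (bet 2)*tt + (2)*f (bet 1)*tt + (2)*f (bet 1)*f (bet 2)) * hsR + (f emo*tt + (2)*f em0*tt + (2)*f (bet 2)*f emo + (2)*f (bet 2)*f em0 + f (bet 2)*f (bet 2)*tt + (2)*f (bet 1)*f emo + (2)*f (bet 1)*f em0 + (3)*f (bet 1)*f (bet 2)*tt + (2)*f (bet 1)*f (bet 2)*f (bet 2) + f (bet 1)*f (bet 1)*tt + (2)*f (bet 1)*f (bet 1)*f (bet 2) + f (bet 0)*f emo + f (bet 0)*f em0 + f (bet 0)*f (bet 2)*tt + f (bet 0)*f (bet 1)*tt + f (bet 0)*f (bet 1)*f (bet 2)) * h2R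
    · linear_combination -(1) * hsR + (tt + f (bet 2) + f (bet 1) + f (bet 0)) * h2R
    · linear_combination (1) * htR - ((4)*tt + (3)*f gam + (6)*f (bet 2) + (6)*f (bet 1) + (4)*f (bet 0)) * hsR + (f emo + (3)*f (bet 2)*tt + (3)*f (bet 2)*f (bet 2) + (3)*f (bet 1)*tt + (8)*f (bet 1)*f (bet 2) + (3)*f (bet 1)*f (bet 1) + (2)*f (bet 0)*tt + (5)*f (bet 0)*f (bet 2) + (5)*f (bet 0)*f (bet 1) + (2)*f (bet 0)*f (bet 0)) * h2R
  -- case (1,0)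
  · rw [show rackOp 1 0 = 2 from by decide]
    rw [hLo 1 0 (by decide), hLo 2 1 (by decide), hLo 0 2 (by decide)]
    rw [hMo 1 0 (by decide)]
    rw [show PMdef k gam (bet 1) (bet 2) em0 emo 0 = !![0, f em0; 1, f gam] from by rw [PMdef, if_pos rfl],
      show PMdef k gam (bet 1) (bet 2) em0 emo 1 = !![f (bet 2) + tt, f em0 + f emo + f (bet 1) * f (bet 2) + f gam * tt; 0, f gam + f (bet 2) + tt] from by rw [PMdef, if_neg (by decide), if_pos rfl],
      show PMdef k gam (bet 1) (bet 2) em0 emo 2 = !![f (bet 1) + tt, f em0 + f emo + f (bet 1) * f (bet 2) + f gam * tt; 0, f gam + f (bet 1) + tt] from by rw [PMdef, if_neg (by decide), if_neg (by decide)]]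
    ext r s
    fin_cases r <;> fin_cases s <;>
      simp only [Matrix.add_apply, Matrix.mul_apply, Fin.sum_univ_two, Matrix.smul_apply,
        Matrix.of_apply, Fin.zero_eta, Fin.mk_one, Fin.isValue, Matrix.cons_val',
        Matrix.cons_val_zero, Matrix.cons_val_one, Matrix.head_cons, Matrix.head_fin_const,
        Matrix.empty_val', Matrix.cons_val_fin_one, Matrix.one_apply_eq, Matrix.one_apply_ne,
        Matrix.zero_apply, ne_eq, zero_ne_one, not_false_eq_true, one_ne_zero, Matrix.one_apply] <;>
      simp only [Algebra.smul_def, map_add, map_mul, ← hf, ← htt, if_true, if_false, reduceIte,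
        mul_one, mul_zero, zero_mul, one_mul, add_zero, zero_add]
    · linear_combination (1) * htR + (f emo + f (bet 2)*tt + f (bet 1)*tt + (2)*f (bet 1)*f (bet 2)) * h2R
    · linear_combination ((2)*f gam) * htR - ((2)*f emo + f em0 + (2)*f (bet 2)*tt + (2)*f (bet 1)*tt + (2)*f (bet 1)*f (bet 2)) * hsR + (f emo*tt + (2)*f em0*tt + (2)*f (bet 2)*f emo + (2)*f (bet 2)*f em0 + f (bet 2)*f (bet 2)*tt + (2)*f (bet 1)*f emo + (2)*f (bet 1)*f em0 + (3)*f (bet 1)*f (bet 2)*tt + (2)*f (bet 1)*f (bet 2)*f (bet 2) + f (bet 1)*f (bet 1)*tt + (2)*f (bet 1)*f (bet 1)*f (bet 2) + f (bet 0)*f emo + f (bet 0)*f em0 + f (bet 0)*f (bet 2)*tt + f (bet 0)*f (bet 1)*tt + f (bet 0)*f (bet 1)*f (bet 2)) * h2R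
    · linear_combination -(1) * hsR + (tt + f (bet 2) + f (bet 1) + f (bet 0)) * h2R
    · linear_combination (1) * htR - ((4)*tt + (3)*f gam + (6)*f (bet 2) + (6)*f (bet 1) + (4)*f (bet 0)) * hsR + (f emo + (3)*f (bet 2)*tt + (3)*f (bet 2)*f (bet 2) + (3)*f (bet 1)*tt + (8)*f (bet 1)*f (bet 2) + (3)*f (bet 1)*f (bet 1) + (2)*f (bet 0)*tt + (5)*f (bet 0)*f (bet 2) + (5)*f (bet 0)*f (bet 1) + (2)*f (bet 0)*f (bet 0)) * h2R
  -- case (1,1)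
  · rw [show rackOp 1 1 = 1 from by decide]
    rw [hLd 1]
    rw [hM1]
    rw [show PMdef k gam (bet 1) (bet 2) em0 emo 1 = !![f (bet 2) + tt, f em0 + f emo + f (bet 1) * f (bet 2) + f gam * tt; 0, f gam + f (bet 2) + tt] from by rw [PMdef, if_neg (by decide), if_pos rfl]]
    ext r s
    fin_cases r <;> fin_cases s <;>
      simp only [Matrix.add_apply, Matrix.mul_apply, Fin.sum_univ_two, Matrix.smul_apply,
        Matrix.of_apply, Fin.zero_eta, Fin.mk_one, Fin.isValue, Matrix.cons_val',
        Matrix.cons_val_zero, Matrix.cons_val_one, Matrix.head_cons, Matrix.head_fin_const,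
        Matrix.empty_val', Matrix.cons_val_fin_one, Matrix.one_apply_eq, Matrix.one_apply_ne,
        Matrix.zero_apply, ne_eq, zero_ne_one, not_false_eq_true, one_ne_zero, Matrix.one_apply] <;>
      simp only [Algebra.smul_def, map_add, map_mul, ← hf, ← htt, if_true, if_false, reduceIte,
        mul_one, mul_zero, zero_mul, one_mul, add_zero, zero_add]
    · linear_combination ((3:R0 k gam em0)) * htR - ((4)*f (bet 2)) * hsR + (-f em0 + (3)*f (bet 2)*tt + (4)*f (bet 2)*f (bet 2) + (2)*f (bet 1)*f (bet 2) + (2)*f (bet 0)*f (bet 2)) * h2R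
    · linear_combination ((6)*f gam) * htR - ((6)*f emo + (6)*f (bet 2)*tt + (6)*f (bet 1)*f (bet 2)) * hsR + ((3)*f emo*tt + (3)*f em0*tt + (6)*f (bet 2)*f emo + (3)*f (bet 2)*f em0 + (3)*f (bet 2)*f (bet 2)*tt + (3)*f (bet 1)*f emo + (6)*f (bet 1)*f (bet 2)*tt + (6)*f (bet 1)*f (bet 2)*f (bet 2) + (3)*f (bet 1)*f (bet 1)*f (bet 2) + (3)*f (bet 0)*f emo + (3)*f (bet 0)*f (bet 2)*tt + (3)*f (bet 0)*f (bet 1)*f (bet 2)) * h2R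
    · linear_combination ((3:R0 k gam em0)) * htR - ((6)*tt + (6)*f gam + (16)*f (bet 2) + (6)*f (bet 1) + (6)*f (bet 0)) * hsR + (-f em0 + (6)*f (bet 2)*tt + (10)*f (bet 2)*f (bet 2) + (3)*f (bet 1)*tt + (11)*f (bet 1)*f (bet 2) + (3)*f (bet 1)*f (bet 1) + (3)*f (bet 0)*tt + (11)*f (bet 0)*f (bet 2) + (6)*f (bet 0)*f (bet 1) + (3)*f (bet 0)*f (bet 0)) * h2R
  -- case (1,2)
  · rw [show rackOp 1 2 = 0 from by decide]
    rw [hLo 1 2 (by decide), hLo 0 1 (by decide), hLo 2 0 (by decide)]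
    rw [hMo 1 2 (by decide)]
    rw [show PMdef k gam (bet 1) (bet 2) em0 emo 0 = !![0, f em0; 1, f gam] from by rw [PMdef, if_pos rfl],
      show PMdef k gam (bet 1) (bet 2) em0 emo 1 = !![f (bet 2) + tt, f em0 + f emo + f (bet 1) * f (bet 2) + f gam * tt; 0, f gam + f (bet 2) + tt] from by rw [PMdef, if_neg (by decide), if_pos rfl],
      show PMdef k gam (bet 1) (bet 2) em0 emo 2 = !![f (bet 1) + tt, f em0 + f emo + f (bet 1) * f (bet 2) + f gam * tt; 0, f gam + f (bet 1) + tt] from by rw [PMdef, if_neg (by decide), if_neg (by decide)]]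
    ext r s
    fin_cases r <;> fin_cases s <;>
      simp only [Matrix.add_apply, Matrix.mul_apply, Fin.sum_univ_two, Matrix.smul_apply,
        Matrix.of_apply, Fin.zero_eta, Fin.mk_one, Fin.isValue, Matrix.cons_val',
        Matrix.cons_val_zero, Matrix.cons_val_one, Matrix.head_cons, Matrix.head_fin_const,
        Matrix.empty_val', Matrix.cons_val_fin_one, Matrix.one_apply_eq, Matrix.one_apply_ne,
        Matrix.zero_apply, ne_eq, zero_ne_one, not_false_eq_true, one_ne_zero, Matrix.one_apply] <;>
      simp only [Algebra.smul_def, map_add, map_mul, ← hf, ← htt, if_true, if_false, reduceIte,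
        mul_one, mul_zero, zero_mul, one_mul, add_zero, zero_add]
    · linear_combination (1) * htR + (f emo + f (bet 2)*tt + f (bet 1)*tt + (2)*f (bet 1)*f (bet 2)) * h2R
    · linear_combination ((2)*f gam) * htR - ((2)*f emo + f em0 + (2)*f (bet 2)*tt + (2)*f (bet 1)*tt + (2)*f (bet 1)*f (bet 2)) * hsR + (f emo*tt + (2)*f em0*tt + (2)*f (bet 2)*f emo + (2)*f (bet 2)*f em0 + f (bet 2)*f (bet 2)*tt + (2)*f (bet 1)*f emo + (2)*f (bet 1)*f em0 + (3)*f (bet 1)*f (bet 2)*tt + (2)*f (bet 1)*f (bet 2)*f (bet 2) + f (bet 1)*f (bet 1)*tt + (2)*f (bet 1)*f (bet 1)*f (bet 2) + f (bet 0)*f emo + f (bet 0)*f em0 + f (bet 0)*f (bet 2)*tt + f (bet 0)*f (bet 1)*tt + f (bet 0)*f (bet 1)*f (bet 2)) * h2R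
    · linear_combination -(1) * hsR + (tt + f (bet 2) + f (bet 1) + f (bet 0)) * h2R
    · linear_combination (1) * htR - ((4)*tt + (3)*f gam + (6)*f (bet 2) + (6)*f (bet 1) + (4)*f (bet 0)) * hsR + (f emo + (3)*f (bet 2)*tt + (3)*f (bet 2)*f (bet 2) + (3)*f (bet 1)*tt + (8)*f (bet 1)*f (bet 2) + (3)*f (bet 1)*f (bet 1) + (2)*f (bet 0)*tt + (5)*f (bet 0)*f (bet 2) + (5)*f (bet 0)*f (bet 1) + (2)*f (bet 0)*f (bet 0)) * h2R
  -- case (2,0)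
  · rw [show rackOp 2 0 = 1 from by decide]
    rw [hLo 2 0 (by decide), hLo 1 2 (by decide), hLo 0 1 (by decide)]
    rw [hMo 2 0 (by decide)]
    rw [show PMdef k gam (bet 1) (bet 2) em0 emo 0 = !![0, f em0; 1, f gam] from by rw [PMdef, if_pos rfl],
      show PMdef k gam (bet 1) (bet 2) em0 emo 1 = !![f (bet 2) + tt, f em0 + f emo + f (bet 1) * f (bet 2) + f gam * tt; 0, f gam + f (bet 2) + tt] from by rw [PMdef, if_neg (by decide), if_pos rfl],
      show PMdef k gam (bet 1) (bet 2) em0 emo 2 = !![f (bet 1) + tt, f em0 + f emo + f (bet 1) * f (bet 2) + f gam * tt; 0, f gam + f (bet 1) + tt] from by rw [PMdef, if_neg (by decide), if_neg (by decide)]]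
    ext r s
    fin_cases r <;> fin_cases s <;>
      simp only [Matrix.add_apply, Matrix.mul_apply, Fin.sum_univ_two, Matrix.smul_apply,
        Matrix.of_apply, Fin.zero_eta, Fin.mk_one, Fin.isValue, Matrix.cons_val',
        Matrix.cons_val_zero, Matrix.cons_val_one, Matrix.head_cons, Matrix.head_fin_const,
        Matrix.empty_val', Matrix.cons_val_fin_one, Matrix.one_apply_eq, Matrix.one_apply_ne,
        Matrix.zero_apply, ne_eq, zero_ne_one, not_false_eq_true, one_ne_zero, Matrix.one_apply] <;>
      simp only [Algebra.smul_def, map_add, map_mul, ← hf, ← htt, if_true, if_false, reduceIte,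
        mul_one, mul_zero, zero_mul, one_mul, add_zero, zero_add]
    · linear_combination (1) * htR + (f emo + f (bet 2)*tt + f (bet 1)*tt + (2)*f (bet 1)*f (bet 2)) * h2R
    · linear_combination ((2)*f gam) * htR - ((2)*f emo + f em0 + (2)*f (bet 2)*tt + (2)*f (bet 1)*tt + (2)*f (bet 1)*f (bet 2)) * hsR + (f emo*tt + (2)*f em0*tt + (2)*f (bet 2)*f emo + (2)*f (bet 2)*f em0 + f (bet 2)*f (bet 2)*tt + (2)*f (bet 1)*f emo + (2)*f (bet 1)*f em0 + (3)*f (bet 1)*f (bet 2)*tt + (2)*f (bet 1)*f (bet 2)*f (bet 2) + f (bet 1)*f (bet 1)*tt + (2)*f (bet 1)*f (bet 1)*f (bet 2) + f (bet 0)*f emo + f (bet 0)*f em0 + f (bet 0)*f (bet 2)*tt + f (bet 0)*f (bet 1)*tt + f (bet 0)*f (bet 1)*f (bet 2)) * h2R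
    · linear_combination -(1) * hsR + (tt + f (bet 2) + f (bet 1) + f (bet 0)) * h2R
    · linear_combination (1) * htR - ((4)*tt + (3)*f gam + (6)*f (bet 2) + (6)*f (bet 1) + (4)*f (bet 0)) * hsR + (f emo + (3)*f (bet 2)*tt + (3)*f (bet 2)*f (bet 2) + (3)*f (bet 1)*tt + (8)*f (bet 1)*f (bet 2) + (3)*f (bet 1)*f (bet 1) + (2)*f (bet 0)*tt + (5)*f (bet 0)*f (bet 2) + (5)*f (bet 0)*f (bet 1) + (2)*f (bet 0)*f (bet 0)) * h2R
  -- case (2,1)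
  · rw [show rackOp 2 1 = 0 from by decide]
    rw [hLo 2 1 (by decide), hLo 0 2 (by decide), hLo 1 0 (by decide)]
    rw [hMo 2 1 (by decide)]
    rw [show PMdef k gam (bet 1) (bet 2) em0 emo 0 = !![0, f em0; 1, f gam] from by rw [PMdef, if_pos rfl],
      show PMdef k gam (bet 1) (bet 2) em0 emo 1 = !![f (bet 2) + tt, f em0 + f emo + f (bet 1) * f (bet 2) + f gam * tt; 0, f gam + f (bet 2) + tt] from by rw [PMdef, if_neg (by decide), if_pos rfl],
      show PMdef k gam (bet 1) (bet 2) em0 emo 2 = !![f (bet 1) + tt, f em0 + f emo + f (bet 1) * f (bet 2) + f gam * tt; 0, f gam + f (bet 1) + tt] from by rw [PMdef, if_neg (by decide), if_neg (by decide)]]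
    ext r s
    fin_cases r <;> fin_cases s <;>
      simp only [Matrix.add_apply, Matrix.mul_apply, Fin.sum_univ_two, Matrix.smul_apply,
        Matrix.of_apply, Fin.zero_eta, Fin.mk_one, Fin.isValue, Matrix.cons_val',
        Matrix.cons_val_zero, Matrix.cons_val_one, Matrix.head_cons, Matrix.head_fin_const,
        Matrix.empty_val', Matrix.cons_val_fin_one, Matrix.one_apply_eq, Matrix.one_apply_ne,
        Matrix.zero_apply, ne_eq, zero_ne_one, not_false_eq_true, one_ne_zero, Matrix.one_apply] <;>
      simp only [Algebra.smul_def, map_add, map_mul, ← hf, ← htt, if_true, if_false, reduceIte,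
        mul_one, mul_zero, zero_mul, one_mul, add_zero, zero_add]
    · linear_combination (1) * htR + (f emo + f (bet 2)*tt + f (bet 1)*tt + (2)*f (bet 1)*f (bet 2)) * h2R
    · linear_combination ((2)*f gam) * htR - ((2)*f emo + f em0 + (2)*f (bet 2)*tt + (2)*f (bet 1)*tt + (2)*f (bet 1)*f (bet 2)) * hsR + (f emo*tt + (2)*f em0*tt + (2)*f (bet 2)*f emo + (2)*f (bet 2)*f em0 + f (bet 2)*f (bet 2)*tt + (2)*f (bet 1)*f emo + (2)*f (bet 1)*f em0 + (3)*f (bet 1)*f (bet 2)*tt + (2)*f (bet 1)*f (bet 2)*f (bet 2) + f (bet 1)*f (bet 1)*tt + (2)*f (bet 1)*f (bet 1)*f (bet 2) + f (bet 0)*f emo + f (bet 0)*f em0 + f (bet 0)*f (bet 2)*tt + f (bet 0)*f (bet 1)*tt + f (bet 0)*f (bet 1)*f (bet 2)) * h2R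
    · linear_combination -(1) * hsR + (tt + f (bet 2) + f (bet 1) + f (bet 0)) * h2R
    · linear_combination (1) * htR - ((4)*tt + (3)*f gam + (6)*f (bet 2) + (6)*f (bet 1) + (4)*f (bet 0)) * hsR + (f emo + (3)*f (bet 2)*tt + (3)*f (bet 2)*f (bet 2) + (3)*f (bet 1)*tt + (8)*f (bet 1)*f (bet 2) + (3)*f (bet 1)*f (bet 1) + (2)*f (bet 0)*tt + (5)*f (bet 0)*f (bet 2) + (5)*f (bet 0)*f (bet 1) + (2)*f (bet 0)*f (bet 0)) * h2R
  -- case (2,2)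
  · rw [show rackOp 2 2 = 2 from by decide]
    rw [hLd 2]
    rw [hM2]
    rw [show PMdef k gam (bet 1) (bet 2) em0 emo 2 = !![f (bet 1) + tt, f em0 + f emo + f (bet 1) * f (bet 2) + f gam * tt; 0, f gam + f (bet 1) + tt] from by rw [PMdef, if_neg (by decide), if_neg (by decide)]]
    ext r s
    fin_cases r <;> fin_cases s <;>
      simp only [Matrix.add_apply, Matrix.mul_apply, Fin.sum_univ_two, Matrix.smul_apply,
        Matrix.of_apply, Fin.zero_eta, Fin.mk_one, Fin.isValue, Matrix.cons_val',
        Matrix.cons_val_zero, Matrix.cons_val_one, Matrix.head_cons, Matrix.head_fin_const,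
        Matrix.empty_val', Matrix.cons_val_fin_one, Matrix.one_apply_eq, Matrix.one_apply_ne,
        Matrix.zero_apply, ne_eq, zero_ne_one, not_false_eq_true, one_ne_zero, Matrix.one_apply] <;>
      simp only [Algebra.smul_def, map_add, map_mul, ← hf, ← htt, if_true, if_false, reduceIte,
        mul_one, mul_zero, zero_mul, one_mul, add_zero, zero_add]
    · linear_combination ((3:R0 k gam em0)) * htR - ((4)*f (bet 1)) * hsR + (-f em0 + (3)*f (bet 1)*tt + (2)*f (bet 1)*f (bet 2) + (4)*f (bet 1)*f (bet 1) + (2)*f (bet 0)*f (bet 1)) * h2R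
    · linear_combination ((6)*f gam) * htR - ((6)*f emo + (6)*f (bet 1)*tt + (6)*f (bet 1)*f (bet 2)) * hsR + ((3)*f emo*tt + (3)*f em0*tt + (3)*f (bet 2)*f emo + (6)*f (bet 1)*f emo + (3)*f (bet 1)*f em0 + (6)*f (bet 1)*f (bet 2)*tt + (3)*f (bet 1)*f (bet 2)*f (bet 2) + (3)*f (bet 1)*f (bet 1)*tt + (6)*f (bet 1)*f (bet 1)*f (bet 2) + (3)*f (bet 0)*f emo + (3)*f (bet 0)*f (bet 1)*tt + (3)*f (bet 0)*f (bet 1)*f (bet 2)) * h2R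
    · linear_combination ((3:R0 k gam em0)) * htR - ((6)*tt + (6)*f gam + (6)*f (bet 2) + (16)*f (bet 1) + (6)*f (bet 0)) * hsR + (-f em0 + (3)*f (bet 2)*tt + (3)*f (bet 2)*f (bet 2) + (6)*f (bet 1)*tt + (11)*f (bet 1)*f (bet 2) + (10)*f (bet 1)*f (bet 1) + (3)*f (bet 0)*tt + (6)*f (bet 0)*f (bet 2) + (11)*f (bet 0)*f (bet 1) + (3)*f (bet 0)*f (bet 0)) * h2R
/-! ### Abstract algebra lemmas -/

lemma expand_master {k B : Type*} [CommRing k] [Ring B] [Algebra k B]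
    (p q r : B) (Li Lj Lk Li' Lj' Lk' m m' a c d : k)
    (hbase : p * q + r * p + q * r + Li' • p + Lk' • r + Lj' • q + m' • (1 : B) = 0)
    (h1 : c + d + Li = Li') (h2 : a + c + Lk = Lk') (h3 : a + d + Lj = Lj')
    (h0 : a * c + a * d + c * d + Li * a + Lk * d + Lj * c + m = m') :
    (a • (1 : B) + p) * (c • (1 : B) + q) + (d • (1 : B) + r) * (a • (1 : B) + p)
      + (c • (1 : B) + q) * (d • (1 : B) + r)
      + Li • (a • (1 : B) + p) + Lk • (d • (1 : B) + r) + Lj • (c • (1 : B) + q)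
      + m • (1 : B) = 0 := by
  subst h1 h2 h3 h0
  refine Eq.trans ?_ hbase
  simp only [mul_add, add_mul, smul_mul_assoc, mul_smul_comm, one_mul, mul_one,
    smul_smul, smul_add, add_smul]
  match_scalars <;> ring

lemma scalar_h0 {k : Type*} [CommRing k]
    (a c d bi bj bk bip bjp bkp gg Mi Mip Mij Mipjp Mo : k)
    (h2 : (2 : k) = 0)
    (e1 : a * a + gg * a = Mi + Mip)
    (e2 : a + c = bi + bip + bj + bjp)
    (e3 : a + d = bi + bip + bk + bkp)
    (s : bi + bj + bk = gg) (s' : bip + bjp + bkp = gg)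
    (n7 : Mi + bj * bk = Mip + bjp * bkp)
    (m6 : Mij = Mo) (m6' : Mipjp = Mo) :
    a * c + a * d + c * d + bi * a + bk * d + bj * c + Mij = Mipjp := by
  linear_combination (bj + d + a) * e2 + (bjp + bip + bk + bj + bi) * e3 - e1 + n7 + m6 - m6'
    - a * s' + (2 * bkp + 2 * bjp + 3 * bip + bk + bj + bi + a) * (s - s')
    + (-Mi + bkp * bkp + 3 * bjp * bkp + bjp * bjp + 3 * bip * bkp + 3 * bip * bjp
        + 2 * bip * bip - bj * bk + a * bkp + a * bjp + a * bip - a * bk - a * bj) * h2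

/-! ### The representation -/

noncomputable def Xop {k : Type*} [CommRing k] {G : Type*} [Group G]
    {Bt : Type*} [Ring Bt] [Algebra k Bt] (a : G) : Module.End k (G → Bt) where
  toFun f := fun h => f (a⁻¹ * h)
  map_add' _ _ := rfl
  map_smul' _ _ := rfl

noncomputable def Yop {k : Type*} [CommRing k] {G : Type*} [Group G]
    {Bt : Type*} [Ring Bt] [Algebra k Bt] (ρ : G →* Equiv.Perm (ZMod 3))
    (b : G → ZMod 3 → k) (P : ZMod 3 → Bt) (i : ZMod 3) : Module.End k (G → Bt) where
  toFun f := fun h => (b h ((ρ h)⁻¹ i) • (1 : Bt) + P ((ρ h)⁻¹ i)) * f h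
  map_add' f1 f2 := funext fun h => mul_add _ _ _
  map_smul' c f := funext fun h => mul_smul_comm _ _ _

lemma Xop_apply {k : Type*} [CommRing k] {G : Type*} [Group G]
    {Bt : Type*} [Ring Bt] [Algebra k Bt] (a : G) (f : G → Bt) (h : G) :
    Xop (k := k) a f h = f (a⁻¹ * h) := rfl

lemma Yop_apply {k : Type*} [CommRing k] {G : Type*} [Group G]
    {Bt : Type*} [Ring Bt] [Algebra k Bt] (ρ : G →* Equiv.Perm (ZMod 3))
    (b : G → ZMod 3 → k) (P : ZMod 3 → Bt) (i : ZMod 3) (f : G → Bt) (h : G) :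
    Yop ρ b P i f h = (b h ((ρ h)⁻¹ i) • (1 : Bt) + P ((ρ h)⁻¹ i)) * f h := rfl

set_option maxHeartbeats 1000000 in
lemma rep_nontrivial {k : Type*} [Field k] [CharP k 2] {G : Type*} [Group G]
    (g : ZMod 3 → G) (ρ : G →* Equiv.Perm (ZMod 3)) (b : G → ZMod 3 → k)
    (μ : ZMod 3 → ZMod 3 → k)
    (hb : ∀ (u v : G) (i : ZMod 3), b (u * v) i = b u (ρ v i) + b v i)
    (Bt : Type*) [Ring Bt] [Algebra k Bt] [Nontrivial Bt]
    (P : ZMod 3 → Bt)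
    (hbase : ∀ i j : ZMod 3, P i * P j + P (rackOp i j) * P i + P j * P (rackOp i j)
      + b (g i) j • P i + b (g (rackOp i j)) i • P (rackOp i j)
      + b (g j) (rackOp i j) • P j + μ i j • (1 : Bt) = 0)
    (pack1 : ∀ (h : G) (i j : ZMod 3),
      b h ((ρ h)⁻¹ j) + b h (rackOp ((ρ h)⁻¹ i) ((ρ h)⁻¹ j)) + b (g i) j
        = b (g ((ρ h)⁻¹ i)) ((ρ h)⁻¹ j))
    (pack2 : ∀ (h : G) (i j : ZMod 3),
      b h ((ρ h)⁻¹ i) + b h ((ρ h)⁻¹ j) + b (g (rackOp i j)) i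
        = b (g (rackOp ((ρ h)⁻¹ i) ((ρ h)⁻¹ j))) ((ρ h)⁻¹ i))
    (pack3 : ∀ (h : G) (i j : ZMod 3),
      b h ((ρ h)⁻¹ i) + b h (rackOp ((ρ h)⁻¹ i) ((ρ h)⁻¹ j)) + b (g j) (rackOp i j)
        = b (g ((ρ h)⁻¹ j)) (rackOp ((ρ h)⁻¹ i) ((ρ h)⁻¹ j)))
    (pack4 : ∀ (h : G) (i j : ZMod 3),
      b h ((ρ h)⁻¹ i) * b h ((ρ h)⁻¹ j)
        + b h ((ρ h)⁻¹ i) * b h (rackOp ((ρ h)⁻¹ i) ((ρ h)⁻¹ j))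
        + b h ((ρ h)⁻¹ j) * b h (rackOp ((ρ h)⁻¹ i) ((ρ h)⁻¹ j))
        + b (g i) j * b h ((ρ h)⁻¹ i)
        + b (g (rackOp i j)) i * b h (rackOp ((ρ h)⁻¹ i) ((ρ h)⁻¹ j))
        + b (g j) (rackOp i j) * b h ((ρ h)⁻¹ j)
        + μ i j = μ ((ρ h)⁻¹ i) ((ρ h)⁻¹ j)) :
    (1 : RingQuot (ARel k g ρ b μ)) ≠ 0 := by
  have h2k : (2 : k) = 0 := by
    have := CharP.cast_eq_zero k 2
    exact_mod_cast this
  -- the algebra homomorphism out of the free algebra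
  set F : FreeAlgebra k (G ⊕ ZMod 3) →ₐ[k] Module.End k (G → Bt) :=
    FreeAlgebra.lift k (Sum.elim (fun a => Xop a) (Yop ρ b P)) with hF
  have hresp : ∀ ⦃u v : FreeAlgebra k (G ⊕ ZMod 3)⦄, ARel k g ρ b μ u v → F u = F v := by
    rintro u v (⟨a, c, rfl, rfl⟩ | ⟨rfl, rfl⟩ | ⟨a, i, rfl, rfl⟩ | ⟨i, j, rfl, rfl⟩)
    · -- X_a X_c = X_{ac}
      simp only [map_mul, hF, FreeAlgebra.lift_ι_apply, Sum.elim_inl]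
      refine LinearMap.ext fun f => funext fun h => ?_
      simp only [Module.End.mul_apply, Xop_apply, mul_inv_rev, mul_assoc]
    · -- X_1 = 1
      simp only [hF, FreeAlgebra.lift_ι_apply, Sum.elim_inl, map_one]
      refine LinearMap.ext fun f => funext fun h => ?_
      simp only [Xop_apply, inv_one, one_mul, Module.End.one_apply]
    · -- X_a y_i = (y_{ρ(a)(i)} + b(a,i)) X_a
      simp only [map_mul, map_add, hF, FreeAlgebra.lift_ι_apply, Sum.elim_inl, Sum.elim_inr,
        AlgHom.commutes]
      refine LinearMap.ext fun f => funext fun h => ?_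
      simp only [Module.End.mul_apply, LinearMap.add_apply, Xop_apply, Yop_apply,
        Pi.add_apply, Module.algebraMap_end_apply, Pi.smul_apply]
      have e : (ρ (a⁻¹ * h))⁻¹ i = (ρ h)⁻¹ (ρ a i) := by
        rw [map_mul, map_inv, mul_inv_rev, inv_inv]
        rfl
      have sc : b (a⁻¹ * h) ((ρ h)⁻¹ (ρ a i)) = b h ((ρ h)⁻¹ (ρ a i)) + b a i := by
        have e2 := hb a (a⁻¹ * h) ((ρ h)⁻¹ (ρ a i))
        rw [mul_inv_cancel_left] at e2
        have e3 : ρ (a⁻¹ * h) ((ρ h)⁻¹ (ρ a i)) = i := by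
          rw [map_mul, map_inv]
          show (ρ a)⁻¹ (ρ h ((ρ h)⁻¹ (ρ a i))) = i
          rw [show ρ h ((ρ h)⁻¹ (ρ a i)) = ρ a i from (ρ h).apply_symm_apply _,
              show (ρ a)⁻¹ (ρ a i) = i from (ρ a).symm_apply_apply i]
        rw [e3] at e2
        linear_combination -e2 - b a i * h2k
      rw [e, sc, add_smul]
      simp only [add_mul, smul_mul_assoc, one_mul]
      abel
    · -- the quadratic relation maps to zero
      simp only [map_add, map_mul, map_smul, map_zero, hF, FreeAlgebra.lift_ι_apply,
        Sum.elim_inr, AlgHom.commutes]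
      refine LinearMap.ext fun f => funext fun h => ?_
      simp only [LinearMap.add_apply, Module.End.mul_apply, LinearMap.smul_apply,
        Pi.add_apply, Pi.smul_apply, Module.algebraMap_end_apply, LinearMap.zero_apply,
        Pi.zero_apply, Yop_apply]
      have key : (b h ((ρ h)⁻¹ i) • (1 : Bt) + P ((ρ h)⁻¹ i))
            * (b h ((ρ h)⁻¹ j) • (1 : Bt) + P ((ρ h)⁻¹ j))
          + (b h ((ρ h)⁻¹ (rackOp i j)) • (1 : Bt) + P ((ρ h)⁻¹ (rackOp i j)))
            * (b h ((ρ h)⁻¹ i) • (1 : Bt) + P ((ρ h)⁻¹ i))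
          + (b h ((ρ h)⁻¹ j) • (1 : Bt) + P ((ρ h)⁻¹ j))
            * (b h ((ρ h)⁻¹ (rackOp i j)) • (1 : Bt) + P ((ρ h)⁻¹ (rackOp i j)))
          + b (g i) j • (b h ((ρ h)⁻¹ i) • (1 : Bt) + P ((ρ h)⁻¹ i))
          + b (g (rackOp i j)) i
            • (b h ((ρ h)⁻¹ (rackOp i j)) • (1 : Bt) + P ((ρ h)⁻¹ (rackOp i j)))
          + b (g j) (rackOp i j) • (b h ((ρ h)⁻¹ j) • (1 : Bt) + P ((ρ h)⁻¹ j))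
          + μ i j • (1 : Bt) = 0 := by
        rw [perm_rack ((ρ h)⁻¹) i j]
        refine expand_master (P ((ρ h)⁻¹ i)) (P ((ρ h)⁻¹ j))
          (P (rackOp ((ρ h)⁻¹ i) ((ρ h)⁻¹ j)))
          (b (g i) j) (b (g j) (rackOp i j)) (b (g (rackOp i j)) i)
          (b (g ((ρ h)⁻¹ i)) ((ρ h)⁻¹ j))
          (b (g ((ρ h)⁻¹ j)) (rackOp ((ρ h)⁻¹ i) ((ρ h)⁻¹ j)))
          (b (g (rackOp ((ρ h)⁻¹ i) ((ρ h)⁻¹ j))) ((ρ h)⁻¹ i))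
          (μ i j) (μ ((ρ h)⁻¹ i) ((ρ h)⁻¹ j))
          (b h ((ρ h)⁻¹ i)) (b h ((ρ h)⁻¹ j)) (b h (rackOp ((ρ h)⁻¹ i) ((ρ h)⁻¹ j)))
          ?_ ?_ ?_ ?_ ?_
        · exact hbase ((ρ h)⁻¹ i) ((ρ h)⁻¹ j)
        · exact pack1 h i j
        · exact pack2 h i j
        · exact pack3 h i j
        · exact pack4 h i j
      have expand :
          ((b h ((ρ h)⁻¹ i) • (1 : Bt) + P ((ρ h)⁻¹ i))
              * (b h ((ρ h)⁻¹ j) • (1 : Bt) + P ((ρ h)⁻¹ j))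
            + (b h ((ρ h)⁻¹ (rackOp i j)) • (1 : Bt) + P ((ρ h)⁻¹ (rackOp i j)))
              * (b h ((ρ h)⁻¹ i) • (1 : Bt) + P ((ρ h)⁻¹ i))
            + (b h ((ρ h)⁻¹ j) • (1 : Bt) + P ((ρ h)⁻¹ j))
              * (b h ((ρ h)⁻¹ (rackOp i j)) • (1 : Bt) + P ((ρ h)⁻¹ (rackOp i j)))
            + b (g i) j • (b h ((ρ h)⁻¹ i) • (1 : Bt) + P ((ρ h)⁻¹ i))
            + b (g (rackOp i j)) i
              • (b h ((ρ h)⁻¹ (rackOp i j)) • (1 : Bt) + P ((ρ h)⁻¹ (rackOp i j)))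
            + b (g j) (rackOp i j) • (b h ((ρ h)⁻¹ j) • (1 : Bt) + P ((ρ h)⁻¹ j))
            + μ i j • (1 : Bt)) * f h = 0 := by rw [key, zero_mul]
      calc (b h ((ρ h)⁻¹ i) • (1 : Bt) + P ((ρ h)⁻¹ i))
            * ((b h ((ρ h)⁻¹ j) • (1 : Bt) + P ((ρ h)⁻¹ j)) * f h)
          + (b h ((ρ h)⁻¹ (rackOp i j)) • (1 : Bt) + P ((ρ h)⁻¹ (rackOp i j)))
            * ((b h ((ρ h)⁻¹ i) • (1 : Bt) + P ((ρ h)⁻¹ i)) * f h)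
          + (b h ((ρ h)⁻¹ j) • (1 : Bt) + P ((ρ h)⁻¹ j))
            * ((b h ((ρ h)⁻¹ (rackOp i j)) • (1 : Bt) + P ((ρ h)⁻¹ (rackOp i j))) * f h)
          + b (g i) j • ((b h ((ρ h)⁻¹ i) • (1 : Bt) + P ((ρ h)⁻¹ i)) * f h)
          + b (g (rackOp i j)) i
            • ((b h ((ρ h)⁻¹ (rackOp i j)) • (1 : Bt) + P ((ρ h)⁻¹ (rackOp i j))) * f h)
          + b (g j) (rackOp i j) • ((b h ((ρ h)⁻¹ j) • (1 : Bt) + P ((ρ h)⁻¹ j)) * f h)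
          + μ i j • f h
          = ((b h ((ρ h)⁻¹ i) • (1 : Bt) + P ((ρ h)⁻¹ i))
              * (b h ((ρ h)⁻¹ j) • (1 : Bt) + P ((ρ h)⁻¹ j))
            + (b h ((ρ h)⁻¹ (rackOp i j)) • (1 : Bt) + P ((ρ h)⁻¹ (rackOp i j)))
              * (b h ((ρ h)⁻¹ i) • (1 : Bt) + P ((ρ h)⁻¹ i))
            + (b h ((ρ h)⁻¹ j) • (1 : Bt) + P ((ρ h)⁻¹ j))
              * (b h ((ρ h)⁻¹ (rackOp i j)) • (1 : Bt) + P ((ρ h)⁻¹ (rackOp i j)))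
            + b (g i) j • (b h ((ρ h)⁻¹ i) • (1 : Bt) + P ((ρ h)⁻¹ i))
            + b (g (rackOp i j)) i
              • (b h ((ρ h)⁻¹ (rackOp i j)) • (1 : Bt) + P ((ρ h)⁻¹ (rackOp i j)))
            + b (g j) (rackOp i j) • (b h ((ρ h)⁻¹ j) • (1 : Bt) + P ((ρ h)⁻¹ j))
            + μ i j • (1 : Bt)) * f h := by
            simp only [add_mul, mul_assoc, smul_mul_assoc, one_mul]
        _ = 0 := expand
  intro hone
  set Φ : RingQuot (ARel k g ρ b μ) →ₐ[k] Module.End k (G → Bt) :=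
    RingQuot.liftAlgHom k (s := ARel k g ρ b μ) ⟨F, hresp⟩ with hΦdef
  have hΦ : (1 : Module.End k (G → Bt)) = 0 := by
    calc (1 : Module.End k (G → Bt)) = Φ 1 := (map_one Φ).symm
      _ = Φ 0 := congrArg Φ hone
      _ = 0 := map_zero Φ
  have hv : (fun _ => (1 : Bt) : G → Bt) = 0 := by
    have := LinearMap.congr_fun hΦ (fun _ => (1 : Bt))
    simpa using this
  exact one_ne_zero (congrFun hv 1)

/-- Under the presentation hypotheses, if `μ` satisfies eq:mij and eq:rel
(with `λ(i,j) = b(g_i, j)`), then the algebra `A_{λμ}` is nontrivial. -/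
theorem ARel_quotient_nontrivial {k : Type*} [Field k] [CharP k 2] {G : Type*} [Group G]
    (hG : ∃ a c : G, a * c ≠ c * a)
    (g : ZMod 3 → G) (hgen : Subgroup.closure (Set.range g) = ⊤)
    (hg : ∀ i j : ZMod 3, g i * g j = g (rackOp i j) * g i)
    (ρ : G →* Equiv.Perm (ZMod 3)) (hρ : ∀ i j : ZMod 3, ρ (g i) j = rackOp i j)
    (hconj : ∀ (a : G) (i : ZMod 3), a * g i * a⁻¹ = g (ρ a i))
    (b : G → ZMod 3 → k)
    (hb : ∀ (u v : G) (i : ZMod 3), b (u * v) i = b u (ρ v i) + b v i)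
    (lam : ZMod 3 → ZMod 3 → k) (hlam : ∀ i j : ZMod 3, lam i j = b (g i) j)
    (μ : ZMod 3 → ZMod 3 → k)
    (hmij : ∀ i j : ZMod 3, μ i j = μ (rackOp i j) i ∧ μ i j = μ j (rackOp i j))
    (hrel : ∀ i j l : ZMod 3,
      μ i j + μ (rackOp l i) (rackOp l j) =
        lam l i * (lam l (rackOp i j) + lam i j) +
        lam l j * (lam l i + lam j (rackOp i j)) +
        lam l (rackOp i j) * (lam l j + lam (rackOp i j) i)) :
    (1 : RingQuot (ARel k g ρ b μ)) ≠ 0 := by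
  have h2k : (2 : k) = 0 := by
    have := CharP.cast_eq_zero k 2
    exact_mod_cast this
  -- basic cocycle facts
  have bone : ∀ m : ZMod 3, b 1 m = 0 := by
    intro m
    have e := hb 1 1 m
    rw [one_mul, map_one] at e
    simp only [Equiv.Perm.one_apply] at e
    linear_combination -e
  have binv : ∀ (x : G) (m : ZMod 3), b x⁻¹ m = b x ((ρ x)⁻¹ m) := by
    intro x m
    have e := hb x x⁻¹ m
    rw [mul_inv_cancel, bone, map_inv] at e
    linear_combination -e - b x ((ρ x)⁻¹ m) * h2k
  -- the structure constants
  obtain ⟨gam, hgam⟩ : ∃ x : k, x = b (g 0) 0 := ⟨_, rfl⟩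
  obtain ⟨bet, hbet⟩ : ∃ f : ZMod 3 → k, f = fun i => b (g i) (i + 1) := ⟨_, rfl⟩
  -- the fundamental identity coming from the group relations
  have dag : ∀ i j m : ZMod 3, b (g i) (rackOp j m) + b (g j) m
      = b (g (rackOp i j)) (rackOp i m) + b (g i) m := by
    intro i j m
    have e1 := hb (g i) (g j) m
    have e2 := hb (g (rackOp i j)) (g i) m
    rw [hρ] at e1 e2
    rw [hg i j] at e1
    rw [e2] at e1
    linear_combination -e1
  have z2i : ∀ i : ZMod 3, rackOp (2 * i) 0 = i := by decide
  have lamdiag : ∀ i, b (g i) i = gam := by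
    intro i
    have d := dag (2 * i) 0 0
    rw [show rackOp (0 : ZMod 3) 0 = 0 from by decide, z2i i] at d
    rw [hgam]
    linear_combination -d
  -- the off-diagonal values of λ are row-constant
  have key0 : b (g 0) 2 = b (g 0) 1 := by
    have A5 := dag 1 2 0
    have A3 := dag 2 1 0
    rw [show rackOp (2 : ZMod 3) 0 = 1 from by decide, show rackOp (1 : ZMod 3) 2 = 0 from by
      decide, show rackOp (1 : ZMod 3) 0 = 2 from by decide] at A5
    rw [show rackOp (1 : ZMod 3) 0 = 2 from by decide, show rackOp (2 : ZMod 3) 1 = 0 from by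
      decide, show rackOp (2 : ZMod 3) 0 = 1 from by decide] at A3
    linear_combination -A5 - A3 + lamdiag 1 + lamdiag 2 + (gam - b (g 0) 1) * h2k
  have key1 : b (g 1) 0 = b (g 1) 2 := by
    have A5 := dag 2 0 1
    have A3 := dag 0 2 1
    rw [show rackOp (0 : ZMod 3) 1 = 2 from by decide, show rackOp (2 : ZMod 3) 0 = 1 from by
      decide, show rackOp (2 : ZMod 3) 1 = 0 from by decide] at A5
    rw [show rackOp (2 : ZMod 3) 1 = 0 from by decide, show rackOp (0 : ZMod 3) 2 = 1 from by
      decide, show rackOp (0 : ZMod 3) 1 = 2 from by decide] at A3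
    linear_combination -A5 - A3 + lamdiag 2 + lamdiag 0 + (gam - b (g 1) 2) * h2k
  have key2 : b (g 2) 1 = b (g 2) 0 := by
    have A5 := dag 0 1 2
    have A3 := dag 1 0 2
    rw [show rackOp (1 : ZMod 3) 2 = 0 from by decide, show rackOp (0 : ZMod 3) 1 = 2 from by
      decide, show rackOp (0 : ZMod 3) 2 = 1 from by decide] at A5
    rw [show rackOp (0 : ZMod 3) 2 = 1 from by decide, show rackOp (1 : ZMod 3) 0 = 2 from by
      decide, show rackOp (1 : ZMod 3) 2 = 0 from by decide] at A3
    linear_combination -A5 - A3 + lamdiag 0 + lamdiag 1 + (gam - b (g 2) 0) * h2k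
  have lamoff : ∀ i j : ZMod 3, j ≠ i → b (g i) j = bet i := by
    intro i j hji
    simp only [hbet]
    rcases zmod3_cases i with rfl | rfl | rfl <;> rcases zmod3_cases j with rfl | rfl | rfl
    · exact absurd rfl hji
    · rw [show (0 : ZMod 3) + 1 = 1 from by decide]
    · rw [show (0 : ZMod 3) + 1 = 1 from by decide]; exact key0
    · rw [show (1 : ZMod 3) + 1 = 2 from by decide]; exact key1
    · exact absurd rfl hji
    · rw [show (1 : ZMod 3) + 1 = 2 from by decide]
    · rw [show (2 : ZMod 3) + 1 = 0 from by decide]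
    · rw [show (2 : ZMod 3) + 1 = 0 from by decide]; exact key2
    · exact absurd rfl hji
  have hsum : bet 0 + bet 1 + bet 2 = gam := by
    have A5 := dag 2 0 1
    rw [show rackOp (0 : ZMod 3) 1 = 2 from by decide, show rackOp (2 : ZMod 3) 0 = 1 from by
      decide, show rackOp (2 : ZMod 3) 1 = 0 from by decide] at A5
    rw [lamdiag 2, lamoff 0 1 (by decide), lamoff 1 0 (by decide), lamoff 2 1 (by decide)] at A5
    linear_combination -A5 + bet 0 * h2k
  have sum3 : ∀ i j : ZMod 3, i ≠ j → bet i + bet j + bet (rackOp i j) = gam := by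
    intro i j hij
    rcases zmod3_cases i with rfl | rfl | rfl <;> rcases zmod3_cases j with rfl | rfl | rfl
    · exact absurd rfl hij
    · rw [show rackOp (0 : ZMod 3) 1 = 2 from by decide]; linear_combination hsum
    · rw [show rackOp (0 : ZMod 3) 2 = 1 from by decide]; linear_combination hsum
    · rw [show rackOp (1 : ZMod 3) 0 = 2 from by decide]; linear_combination hsum
    · exact absurd rfl hij
    · rw [show rackOp (1 : ZMod 3) 2 = 0 from by decide]; linear_combination hsum
    · rw [show rackOp (2 : ZMod 3) 0 = 1 from by decide]; linear_combination hsum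
    · rw [show rackOp (2 : ZMod 3) 1 = 0 from by decide]; linear_combination hsum
    · exact absurd rfl hij
  -- the structure of μ
  have fct : ∀ i j : ZMod 3, i ≠ j → μ i j = μ i (rackOp i j) := by
    intro i j hij
    obtain ⟨hki, hkj⟩ := rackOp_ne i j hij
    have hr := hrel i j i
    rw [rackOp_self i] at hr
    simp only [hlam] at hr
    rw [lamdiag i, lamoff i (rackOp i j) hki, lamoff i j (Ne.symm hij),
      lamoff j (rackOp i j) hkj, lamoff (rackOp i j) i (Ne.symm hki)] at hr
    linear_combination hr + bet i * (sum3 i j hij) + (2 * gam * bet i - μ i (rackOp i j)) * h2k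
  have m02 : μ 0 2 = μ 0 1 := by
    have e := fct 0 2 (by decide)
    rwa [show rackOp (0 : ZMod 3) 2 = 1 from by decide] at e
  have m10 : μ 1 0 = μ 0 1 := by
    have e := (hmij 0 2).1
    rw [show rackOp (0 : ZMod 3) 2 = 1 from by decide] at e
    exact e.symm.trans m02
  have m12 : μ 1 2 = μ 0 1 := by
    have e := (hmij 0 1).2
    rw [show rackOp (0 : ZMod 3) 1 = 2 from by decide] at e
    exact e.symm
  have m20 : μ 2 0 = μ 0 1 := by
    have e := (hmij 0 1).1
    rw [show rackOp (0 : ZMod 3) 1 = 2 from by decide] at e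
    exact e.symm
  have m21 : μ 2 1 = μ 0 1 := by
    have e := fct 2 1 (by decide)
    rw [show rackOp (2 : ZMod 3) 1 = 0 from by decide] at e
    exact e.trans m20
  have moff : ∀ i j : ZMod 3, i ≠ j → μ i j = μ 0 1 := by
    intro i j hij
    rcases zmod3_cases i with rfl | rfl | rfl <;> rcases zmod3_cases j with rfl | rfl | rfl
    · exact absurd rfl hij
    · rfl
    · exact m02
    · exact m10
    · exact absurd rfl hij
    · exact m12
    · exact m20
    · exact m21
    · exact absurd rfl hij
  have hμ1 : μ 1 1 = μ 0 0 + (bet 2 * bet 2 + gam * bet 2) := by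
    have hr := hrel 0 0 2
    rw [show rackOp (0 : ZMod 3) 0 = 0 from by decide,
      show rackOp (2 : ZMod 3) 0 = 1 from by decide] at hr
    simp only [hlam] at hr
    rw [lamdiag 0, lamoff 2 0 (by decide)] at hr
    linear_combination hr + (bet 2 * bet 2 + gam * bet 2 - μ 0 0) * h2k
  have hμ2 : μ 2 2 = μ 0 0 + (bet 1 * bet 1 + gam * bet 1) := by
    have hr := hrel 0 0 1
    rw [show rackOp (0 : ZMod 3) 0 = 0 from by decide,
      show rackOp (1 : ZMod 3) 0 = 2 from by decide] at hr
    simp only [hlam] at hr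
    rw [lamdiag 0, lamoff 1 0 (by decide)] at hr
    linear_combination hr + (bet 1 * bet 1 + gam * bet 1 - μ 0 0) * h2k
  have nuC : ∀ i : ZMod 3, μ i i + bet (i + 1) * bet (i + 2) = μ 0 0 + bet 1 * bet 2 := by
    intro i
    rcases zmod3_cases i with rfl | rfl | rfl
    · rw [show (0 : ZMod 3) + 1 = 1 from by decide, show (0 : ZMod 3) + 2 = 2 from by decide]
    · rw [show (1 : ZMod 3) + 1 = 2 from by decide, show (1 : ZMod 3) + 2 = 0 from by decide]
      linear_combination hμ1 + bet 2 * hsum + (gam * bet 2 - bet 1 * bet 2) * h2k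
    · rw [show (2 : ZMod 3) + 1 = 0 from by decide, show (2 : ZMod 3) + 2 = 1 from by decide]
      linear_combination hμ2 + bet 1 * hsum + (gam * bet 1 - bet 1 * bet 2) * h2k
  have nuA : ∀ i j : ZMod 3, i ≠ j → bet j * bet (rackOp i j) = bet (i + 1) * bet (i + 2) := by
    intro i j hij
    rcases rackOp_pair i j hij with ⟨e1, e2⟩ | ⟨e1, e2⟩
    · rw [e2, e1]
    · rw [e2, e1]; ring
  have nuI : ∀ i j i' j' : ZMod 3, i ≠ j → i' ≠ j' →
      μ i i + bet j * bet (rackOp i j) = μ i' i' + bet j' * bet (rackOp i' j') := by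
    intro i j i' j' hij hij'
    rw [nuA i j hij, nuA i' j' hij']
    exact (nuC i).trans (nuC i').symm
  -- the two cocycle identities, by induction over the group
  have L1 : ∀ (x : G) (m : ZMod 3),
      b x m * b x m + gam * b x m + μ (ρ x m) (ρ x m) + μ m m = 0 := by
    intro x
    have hx : x ∈ Subgroup.closure (Set.range g) := by rw [hgen]; exact Subgroup.mem_top x
    refine Subgroup.closure_induction
      (p := fun y _ => ∀ m, b y m * b y m + gam * b y m + μ (ρ y m) (ρ y m) + μ m m = 0)
      ?_ ?_ ?_ ?_ hx
    · rintro y ⟨l, rfl⟩ m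
      have hr := hrel m m l
      rw [rackOp_self m] at hr
      simp only [hlam] at hr
      rw [lamdiag m] at hr
      rw [hρ l m]
      linear_combination hr + (2 * (b (g l) m) * (b (g l) m) + 2 * gam * (b (g l) m)) * h2k
    · intro m
      rw [bone, map_one]
      simp only [Equiv.Perm.one_apply]
      linear_combination (μ m m) * h2k
    · intro x y hhx hhy px py m
      rw [hb x y m, show ρ (x * y) m = ρ x (ρ y m) from by rw [map_mul]; rfl]
      linear_combination px (ρ y m) + py m + (b x (ρ y m) * b y m - μ (ρ y m) (ρ y m)) * h2k
    · intro x hhx px m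
      rw [binv x m, map_inv]
      have e := px ((ρ x)⁻¹ m)
      rw [show ρ x ((ρ x)⁻¹ m) = m from (ρ x).apply_symm_apply m] at e
      linear_combination e
  have L2 : ∀ (x : G) (m m' : ZMod 3),
      b x m + bet (ρ x m) + bet m = b x m' + bet (ρ x m') + bet m' := by
    intro x
    have hx : x ∈ Subgroup.closure (Set.range g) := by rw [hgen]; exact Subgroup.mem_top x
    refine Subgroup.closure_induction
      (p := fun y _ => ∀ m m', b y m + bet (ρ y m) + bet m = b y m' + bet (ρ y m') + bet m')
      ?_ ?_ ?_ ?_ hx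
    · rintro y ⟨l, rfl⟩
      have etaG : ∀ m, b (g l) m + bet (rackOp l m) + bet m = gam := by
        intro m
        by_cases hml : m = l
        · subst hml
          rw [rackOp_self m, lamdiag m]
          linear_combination bet m * h2k
        · rw [lamoff l m hml]
          linear_combination sum3 l m (Ne.symm hml)
      intro m m'
      rw [hρ, hρ]
      exact (etaG m).trans (etaG m').symm
    · intro m m'
      rw [bone, bone, map_one]
      simp only [Equiv.Perm.one_apply]
      linear_combination (bet m - bet m') * h2k
    · intro x y hhx hhy px py m m'
      rw [hb x y m, hb x y m', show ρ (x * y) m = ρ x (ρ y m) from by rw [map_mul]; rfl,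
        show ρ (x * y) m' = ρ x (ρ y m') from by rw [map_mul]; rfl]
      linear_combination px (ρ y m) (ρ y m') + py m m' + (bet (ρ y m') - bet (ρ y m)) * h2k
    · intro x hhx px m m'
      rw [binv x m, binv x m', map_inv]
      have e := px ((ρ x)⁻¹ m) ((ρ x)⁻¹ m')
      rw [show ρ x ((ρ x)⁻¹ m) = m from (ρ x).apply_symm_apply m,
        show ρ x ((ρ x)⁻¹ m') = m' from (ρ x).apply_symm_apply m'] at e
      linear_combination e
  -- the four scalar identities needed for the representation
  have hri : ∀ (x : G) (m : ZMod 3), ρ x ((ρ x)⁻¹ m) = m :=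
    fun x m => (ρ x).apply_symm_apply m
  have hrk : ∀ (x : G) (i j : ZMod 3),
      ρ x (rackOp ((ρ x)⁻¹ i) ((ρ x)⁻¹ j)) = rackOp i j := by
    intro x i j
    rw [perm_rack (ρ x), hri, hri]
  have hinj : ∀ (x : G) (i j : ZMod 3), i ≠ j → (ρ x)⁻¹ i ≠ (ρ x)⁻¹ j := by
    intro x i j hij hEq
    exact hij (by rw [← hri x i, hEq, hri])
  have pack1 : ∀ (x : G) (i j : ZMod 3),
      b x ((ρ x)⁻¹ j) + b x (rackOp ((ρ x)⁻¹ i) ((ρ x)⁻¹ j)) + b (g i) j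
        = b (g ((ρ x)⁻¹ i)) ((ρ x)⁻¹ j) := by
    intro x i j
    by_cases hij : i = j
    · subst hij
      rw [rackOp_self ((ρ x)⁻¹ i), lamdiag i, lamdiag ((ρ x)⁻¹ i)]
      linear_combination (b x ((ρ x)⁻¹ i)) * h2k
    · have hij' := hinj x i j hij
      have eJK := L2 x ((ρ x)⁻¹ j) (rackOp ((ρ x)⁻¹ i) ((ρ x)⁻¹ j))
      rw [hri, hrk] at eJK
      rw [lamoff i j (Ne.symm hij), lamoff ((ρ x)⁻¹ i) ((ρ x)⁻¹ j) (Ne.symm hij')]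
      linear_combination eJK + sum3 i j hij - sum3 ((ρ x)⁻¹ i) ((ρ x)⁻¹ j) hij'
        + (b x (rackOp ((ρ x)⁻¹ i) ((ρ x)⁻¹ j)) - bet j
            + bet (rackOp ((ρ x)⁻¹ i) ((ρ x)⁻¹ j))) * h2k
  have pack2 : ∀ (x : G) (i j : ZMod 3),
      b x ((ρ x)⁻¹ i) + b x ((ρ x)⁻¹ j) + b (g (rackOp i j)) i
        = b (g (rackOp ((ρ x)⁻¹ i) ((ρ x)⁻¹ j))) ((ρ x)⁻¹ i) := by
    intro x i j
    by_cases hij : i = j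
    · subst hij
      rw [rackOp_self i, rackOp_self ((ρ x)⁻¹ i), lamdiag i, lamdiag ((ρ x)⁻¹ i)]
      linear_combination (b x ((ρ x)⁻¹ i)) * h2k
    · have hij' := hinj x i j hij
      obtain ⟨hki, hkj⟩ := rackOp_ne i j hij
      obtain ⟨hki', hkj'⟩ := rackOp_ne ((ρ x)⁻¹ i) ((ρ x)⁻¹ j) hij'
      have eIJ := L2 x ((ρ x)⁻¹ i) ((ρ x)⁻¹ j)
      rw [hri, hri] at eIJ
      rw [lamoff (rackOp i j) i (Ne.symm hki),
        lamoff (rackOp ((ρ x)⁻¹ i) ((ρ x)⁻¹ j)) ((ρ x)⁻¹ i) (Ne.symm hki')]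
      linear_combination eIJ + sum3 i j hij - sum3 ((ρ x)⁻¹ i) ((ρ x)⁻¹ j) hij'
        + (b x ((ρ x)⁻¹ j) - bet i + bet ((ρ x)⁻¹ j)) * h2k
  have pack3 : ∀ (x : G) (i j : ZMod 3),
      b x ((ρ x)⁻¹ i) + b x (rackOp ((ρ x)⁻¹ i) ((ρ x)⁻¹ j)) + b (g j) (rackOp i j)
        = b (g ((ρ x)⁻¹ j)) (rackOp ((ρ x)⁻¹ i) ((ρ x)⁻¹ j)) := by
    intro x i j
    by_cases hij : i = j
    · subst hij
      rw [rackOp_self i, rackOp_self ((ρ x)⁻¹ i), lamdiag i, lamdiag ((ρ x)⁻¹ i)]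
      linear_combination (b x ((ρ x)⁻¹ i)) * h2k
    · have hij' := hinj x i j hij
      obtain ⟨hki, hkj⟩ := rackOp_ne i j hij
      obtain ⟨hki', hkj'⟩ := rackOp_ne ((ρ x)⁻¹ i) ((ρ x)⁻¹ j) hij'
      have eIK := L2 x ((ρ x)⁻¹ i) (rackOp ((ρ x)⁻¹ i) ((ρ x)⁻¹ j))
      rw [hri, hrk] at eIK
      rw [lamoff j (rackOp i j) hkj,
        lamoff ((ρ x)⁻¹ j) (rackOp ((ρ x)⁻¹ i) ((ρ x)⁻¹ j)) hkj']
      linear_combination eIK + sum3 i j hij - sum3 ((ρ x)⁻¹ i) ((ρ x)⁻¹ j) hij'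
        + (b x (rackOp ((ρ x)⁻¹ i) ((ρ x)⁻¹ j)) - bet i
            + bet (rackOp ((ρ x)⁻¹ i) ((ρ x)⁻¹ j))) * h2k
  have pack4 : ∀ (x : G) (i j : ZMod 3),
      b x ((ρ x)⁻¹ i) * b x ((ρ x)⁻¹ j)
        + b x ((ρ x)⁻¹ i) * b x (rackOp ((ρ x)⁻¹ i) ((ρ x)⁻¹ j))
        + b x ((ρ x)⁻¹ j) * b x (rackOp ((ρ x)⁻¹ i) ((ρ x)⁻¹ j))
        + b (g i) j * b x ((ρ x)⁻¹ i)
        + b (g (rackOp i j)) i * b x (rackOp ((ρ x)⁻¹ i) ((ρ x)⁻¹ j))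
        + b (g j) (rackOp i j) * b x ((ρ x)⁻¹ j)
        + μ i j = μ ((ρ x)⁻¹ i) ((ρ x)⁻¹ j) := by
    intro x i j
    by_cases hij : i = j
    · subst hij
      rw [rackOp_self i, rackOp_self ((ρ x)⁻¹ i), lamdiag i]
      have l1 := L1 x ((ρ x)⁻¹ i)
      rw [hri] at l1
      linear_combination l1 + (b x ((ρ x)⁻¹ i) * b x ((ρ x)⁻¹ i)
        + gam * b x ((ρ x)⁻¹ i) - μ ((ρ x)⁻¹ i) ((ρ x)⁻¹ i)) * h2k
    · have hij' := hinj x i j hij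
      obtain ⟨hki, hkj⟩ := rackOp_ne i j hij
      have e1 : b x ((ρ x)⁻¹ i) * b x ((ρ x)⁻¹ i) + gam * b x ((ρ x)⁻¹ i)
          = μ i i + μ ((ρ x)⁻¹ i) ((ρ x)⁻¹ i) := by
        have l1 := L1 x ((ρ x)⁻¹ i)
        rw [hri] at l1
        linear_combination l1 + (-(μ i i) - μ ((ρ x)⁻¹ i) ((ρ x)⁻¹ i)) * h2k
      have eIJ := L2 x ((ρ x)⁻¹ i) ((ρ x)⁻¹ j)
      rw [hri, hri] at eIJ
      have e2 : b x ((ρ x)⁻¹ i) + b x ((ρ x)⁻¹ j)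
          = bet i + bet ((ρ x)⁻¹ i) + bet j + bet ((ρ x)⁻¹ j) := by
        linear_combination eIJ + (b x ((ρ x)⁻¹ j) - bet i - bet ((ρ x)⁻¹ i)) * h2k
      have eIK := L2 x ((ρ x)⁻¹ i) (rackOp ((ρ x)⁻¹ i) ((ρ x)⁻¹ j))
      rw [hri, hrk] at eIK
      have e3 : b x ((ρ x)⁻¹ i) + b x (rackOp ((ρ x)⁻¹ i) ((ρ x)⁻¹ j))
          = bet i + bet ((ρ x)⁻¹ i) + bet (rackOp i j)
            + bet (rackOp ((ρ x)⁻¹ i) ((ρ x)⁻¹ j)) := by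
        linear_combination eIK + (b x (rackOp ((ρ x)⁻¹ i) ((ρ x)⁻¹ j)) - bet i
          - bet ((ρ x)⁻¹ i)) * h2k
      rw [lamoff i j (Ne.symm hij), lamoff (rackOp i j) i (Ne.symm hki),
        lamoff j (rackOp i j) hkj]
      exact scalar_h0 _ _ _ _ _ _ _ _ _ _ _ _ _ _ _ h2k e1 e2 e3 (sum3 i j hij)
        (sum3 ((ρ x)⁻¹ i) ((ρ x)⁻¹ j) hij') (nuI i j ((ρ x)⁻¹ i) ((ρ x)⁻¹ j) hij hij')
        (moff i j hij) (moff ((ρ x)⁻¹ i) ((ρ x)⁻¹ j) hij')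
  -- the matrix representation
  have hbB : ∀ i j : ZMod 3,
      PMdef k gam (bet 1) (bet 2) (μ 0 0) (μ 0 1) i * PMdef k gam (bet 1) (bet 2) (μ 0 0) (μ 0 1) j
      + PMdef k gam (bet 1) (bet 2) (μ 0 0) (μ 0 1) (rackOp i j)
        * PMdef k gam (bet 1) (bet 2) (μ 0 0) (μ 0 1) i
      + PMdef k gam (bet 1) (bet 2) (μ 0 0) (μ 0 1) j
        * PMdef k gam (bet 1) (bet 2) (μ 0 0) (μ 0 1) (rackOp i j)
      + b (g i) j • PMdef k gam (bet 1) (bet 2) (μ 0 0) (μ 0 1) i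
      + b (g (rackOp i j)) i • PMdef k gam (bet 1) (bet 2) (μ 0 0) (μ 0 1) (rackOp i j)
      + b (g j) (rackOp i j) • PMdef k gam (bet 1) (bet 2) (μ 0 0) (μ 0 1) j
      + μ i j • (1 : Matrix (Fin 2) (Fin 2) (R0 k gam (μ 0 0))) = 0 :=
    PM_base gam (μ 0 0) (μ 0 1) bet (fun i j => b (g i) j) μ h2k hsum lamdiag lamoff
      rfl hμ1 hμ2 moff
  haveI : Nontrivial (R0 k gam (μ 0 0)) := R0.nontrivial k gam (μ 0 0)
  haveI : Nontrivial (Matrix (Fin 2) (Fin 2) (R0 k gam (μ 0 0))) := by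
    refine ⟨1, 0, fun hEq => ?_⟩
    have := congrFun (congrFun hEq 0) 0
    simp [Matrix.one_apply] at this
  exact rep_nontrivial g ρ b μ hb (Matrix (Fin 2) (Fin 2) (R0 k gam (μ 0 0)))
    (PMdef k gam (bet 1) (bet 2) (μ 0 0) (μ 0 1)) hbB pack1 pack2 pack3 pack4
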